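/- The two-parameter Rényi conditional entropy is additive on product distributions: for all α ∈ (0,1)∪(1,∞) and β ∈ (0,∞), if P_XY is a probability distribution on 𝒳×𝒴 and Q_{X'Y'} is a probability distribution on 𝒳'×𝒴', then the two-parameter Rényi conditional entropy of the product distribution P_XY × Q_{X'Y'} on (𝒳×𝒳')×(𝒴×𝒴') (with joint variable (X,X') conditioned on (Y,Y')) equals H̃_{α,β}(X|Y)_{P_XY} + H̃_{α,β}(X'|Y')_{Q_{X'Y'}}. -/

import Mathlib

open scoped BigOperators

noncomputable section

variable {𝓧 𝓨 : Type*} [Fintype 𝓧] [Fintype 𝓨]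

/-- Marginal distribution of the second component. -/
def pY (P : 𝓧 × 𝓨 → ℝ) (y : 𝓨) : ℝ := ∑ x, P (x, y)

/-- Conditional distribution `P_{X|Y}(x|y)`. -/
def pCond (P : 𝓧 × 𝓨 → ℝ) (x : 𝓧) (y : 𝓨) : ℝ := P (x, y) / pY P y

/-- Two-parameter Rényi conditional entropy `H̃_{α,β}(X|Y)`. -/
def Htilde (P : 𝓧 × 𝓨 → ℝ) (α β : ℝ) : ℝ :=
  α / (β * (1 - α)) *
    Real.logb 2 (∑ y, if 0 < pY P y then
      pY P y * (∑ x, pCond P x y ^ α) ^ (β / α) else 0)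

lemma pY_nonneg (P : 𝓧 × 𝓨 → ℝ) (hP : ∀ p, 0 ≤ P p) (y : 𝓨) : 0 ≤ pY P y :=
  Finset.sum_nonneg fun _ _ => hP _

lemma term_nonneg (P : 𝓧 × 𝓨 → ℝ) (hP : ∀ p, 0 ≤ P p) (α β : ℝ) (y : 𝓨) :
    0 ≤ (if 0 < pY P y then pY P y * (∑ x, pCond P x y ^ α) ^ (β / α) else 0) := by
  split
  · exact mul_nonneg (le_of_lt (by assumption))
      (Real.rpow_nonneg (Finset.sum_nonneg fun x _ =>
        Real.rpow_nonneg (div_nonneg (hP _) (pY_nonneg P hP y)) α) _)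
  · exact le_refl 0

lemma Ssum_pos (P : 𝓧 × 𝓨 → ℝ) (hP : ∀ p, 0 ≤ P p) (hPsum : ∑ p, P p = 1)
    (α β : ℝ) (hα : 0 < α) :
    0 < ∑ y, if 0 < pY P y then pY P y * (∑ x, pCond P x y ^ α) ^ (β / α) else 0 := by
  have hpy : ∑ y, pY P y = 1 := by
    rw [← hPsum]
    simp only [pY, Fintype.sum_prod_type]
    exact Finset.sum_comm
  have hy : ∃ y, 0 < pY P y := by
    by_contra h
    push_neg at h
    have : ∑ y, pY P y = 0 := Finset.sum_eq_zero fun y _ =>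
      le_antisymm (h y) (pY_nonneg P hP y)
    simp [hpy] at this
  obtain ⟨y0, hy0⟩ := hy
  apply Finset.sum_pos' (fun y _ => term_nonneg P hP α β y)
  refine ⟨y0, Finset.mem_univ _, ?_⟩
  rw [if_pos hy0]
  have hx : ∃ x, 0 < P (x, y0) := by
    by_contra h
    push_neg at h
    have : pY P y0 = 0 := le_antisymm (Finset.sum_nonpos fun x _ => h x) (pY_nonneg P hP y0)
    rw [this] at hy0; exact lt_irrefl 0 hy0
  obtain ⟨x0, hx0⟩ := hx
  have hsum : 0 < ∑ x, pCond P x y0 ^ α := by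
    apply Finset.sum_pos' (fun x _ =>
      Real.rpow_nonneg (div_nonneg (hP _) (pY_nonneg P hP y0)) α)
    exact ⟨x0, Finset.mem_univ _, Real.rpow_pos_of_pos (div_pos hx0 hy0) α⟩
  exact mul_pos hy0 (Real.rpow_pos_of_pos hsum _)

/-- additivity of the two-parameter Rényi conditional entropy on
product distributions. -/
theorem Htilde_additive
    {𝓧' 𝓨' : Type*} [Fintype 𝓧'] [Fintype 𝓨']
    [Nonempty 𝓧] [Nonempty 𝓨] [Nonempty 𝓧'] [Nonempty 𝓨']
    (P : 𝓧 × 𝓨 → ℝ) (hP : ∀ p, 0 ≤ P p) (hPsum : ∑ p, P p = 1)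
    (Q : 𝓧' × 𝓨' → ℝ) (hQ : ∀ p, 0 ≤ Q p) (hQsum : ∑ p, Q p = 1)
    (α β : ℝ) (hα : 0 < α) (hα1 : α ≠ 1) (hβ : 0 < β) :
    Htilde (fun p : (𝓧 × 𝓧') × (𝓨 × 𝓨') =>
        P (p.1.1, p.2.1) * Q (p.1.2, p.2.2)) α β
      = Htilde P α β + Htilde Q α β := by
  set R : (𝓧 × 𝓧') × (𝓨 × 𝓨') → ℝ :=
    fun p => P (p.1.1, p.2.1) * Q (p.1.2, p.2.2) with hR
  have hpYR : ∀ y y', pY R (y, y') = pY P y * pY Q y' := by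
    intro y y'
    simp only [pY, hR, Fintype.sum_prod_type]
    rw [← Finset.sum_mul_sum]
  have key : ∀ y y',
      (if 0 < pY R (y, y') then
        pY R (y, y') * (∑ x, pCond R x (y, y') ^ α) ^ (β / α) else 0)
      = (if 0 < pY P y then pY P y * (∑ x, pCond P x y ^ α) ^ (β / α) else 0) *
        (if 0 < pY Q y' then pY Q y' * (∑ x, pCond Q x y' ^ α) ^ (β / α) else 0) := by
    intro y y'
    by_cases hp : 0 < pY P y
    · by_cases hq : 0 < pY Q y'
      · have hr : 0 < pY R (y, y') := by rw [hpYR]; exact mul_pos hp hq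
        rw [if_pos hr, if_pos hp, if_pos hq]
        have hcond : ∀ (x : 𝓧) (x' : 𝓧'),
            pCond R (x, x') (y, y') = pCond P x y * pCond Q x' y' := by
          intro x x'
          simp only [pCond, hpYR, hR]
          rw [div_mul_div_comm]
          congr 1; exact hpYR y y'
        have hcP : ∀ x : 𝓧, 0 ≤ pCond P x y :=
          fun x => div_nonneg (hP _) (pY_nonneg P hP y)
        have hcQ : ∀ x' : 𝓧', 0 ≤ pCond Q x' y' :=
          fun x' => div_nonneg (hQ _) (pY_nonneg Q hQ y')
        have hA : 0 ≤ ∑ x, pCond P x y ^ α :=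
          Finset.sum_nonneg fun x _ => Real.rpow_nonneg (hcP x) α
        have hB : 0 ≤ ∑ x', pCond Q x' y' ^ α :=
          Finset.sum_nonneg fun x' _ => Real.rpow_nonneg (hcQ x') α
        have hsum : (∑ xx : 𝓧 × 𝓧', pCond R xx (y, y') ^ α)
            = (∑ x, pCond P x y ^ α) * (∑ x', pCond Q x' y' ^ α) := by
          rw [Fintype.sum_prod_type, Finset.sum_mul_sum]
          refine Finset.sum_congr rfl fun x _ => Finset.sum_congr rfl fun x' _ => ?_
          rw [hcond x x', Real.mul_rpow (hcP x) (hcQ x')]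
        rw [hsum, hpYR, Real.mul_rpow hA hB]
        ring
      · have hq0 : pY Q y' = 0 := le_antisymm (not_lt.mp hq) (pY_nonneg Q hQ y')
        have hr : ¬ 0 < pY R (y, y') := by rw [hpYR, hq0, mul_zero]; exact lt_irrefl 0
        rw [if_neg hr, if_neg hq, mul_zero]
    · have hp0 : pY P y = 0 := le_antisymm (not_lt.mp hp) (pY_nonneg P hP y)
      have hr : ¬ 0 < pY R (y, y') := by rw [hpYR, hp0, zero_mul]; exact lt_irrefl 0
      rw [if_neg hr, if_neg hp, zero_mul]
  have hfact : (∑ yy : 𝓨 × 𝓨', if 0 < pY R yy then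
        pY R yy * (∑ x, pCond R x yy ^ α) ^ (β / α) else 0)
      = (∑ y, if 0 < pY P y then pY P y * (∑ x, pCond P x y ^ α) ^ (β / α) else 0) *
        (∑ y', if 0 < pY Q y' then pY Q y' * (∑ x, pCond Q x y' ^ α) ^ (β / α) else 0) := by
    rw [Fintype.sum_prod_type, Finset.sum_mul_sum]
    exact Finset.sum_congr rfl fun y _ => Finset.sum_congr rfl fun y' _ => key y y'
  have hSP := Ssum_pos P hP hPsum α β hα
  have hSQ := Ssum_pos Q hQ hQsum α β hα
  unfold Htilde
  rw [hfact, Real.logb_mul (ne_of_gt hSP) (ne_of_gt hSQ), mul_add]
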